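/- Let U ⊆ V ⊆ R^d be submodules and ≺ a monomial order on R^d. A finite set H ⊆ V∖U whose elements are supported on module monomials outside lm(U) is a Gröbner basis of V relative to U if and only if the set {h + U : h ∈ H} is a Gröbner basis of the quotient module V/U ⊆ R^d/U, i.e., {h + U : h ∈ H} generates V/U and for every module monomial m ∈ lm(V/U) there exists h ∈ H such that lm(h + U) divides m. -/

import Mathlib

attribute [local instance] Classical.propDecidable

noncomputable section

/-- Module monomial index: an exponent vector together with a component index. -/
abbrev ModMon (n d : ℕ) := (Fin n →₀ ℕ) × Fin d

/-- The free module `R^d` over `R = k[X_1, …, X_n]`. -/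
abbrev FreeMod (k : Type*) [Field k] (n d : ℕ) := Fin d → MvPolynomial (Fin n) k

variable {k : Type*} [Field k] {n d : ℕ}

/-- The module monomial `X^α e_i` as an element of `R^d`. -/
def mmVec (m : ModMon n d) : FreeMod k n d :=
  Pi.single m.2 (MvPolynomial.monomial m.1 (1 : k))

/-- The support of `f ∈ R^d` as a finite set of module monomials. -/
def suppF (f : FreeMod k n d) : Finset (ModMon n d) :=
  (Finset.univ : Finset (Fin d)).biUnion fun i =>
    ((f i).support.image fun a => ((a, i) : ModMon n d))

/-- A monomial order on `R^d`: a well-founded total order on module monomials such that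
`e_i ⪯ X^α e_i` and which is compatible with multiplication by monomials. -/
structure ModMonOrder (n d : ℕ) where
  toOrd : LinearOrder (ModMon n d)
  wf : WellFounded toOrd.lt
  base_le : ∀ (i : Fin d) (a : Fin n →₀ ℕ), toOrd.le (0, i) (a, i)
  add_le : ∀ (a b c : Fin n →₀ ℕ) (i j : Fin d),
    toOrd.le (b, i) (c, j) → toOrd.le (a + b, i) (a + c, j)

namespace ModMonOrder

variable (ord : ModMonOrder n d)

/-- The leading monomial of `f` (`⊥` if `f = 0`). -/
def lmo (f : FreeMod k n d) : WithBot (ModMon n d) :=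
  letI := ord.toOrd
  (suppF f).max

/-- The order on leading monomials, extended to `WithBot` (with `⊥` smallest). -/
def leB (x y : WithBot (ModMon n d)) : Prop :=
  WithBot.recBotCoe True
    (fun a => WithBot.recBotCoe False (fun b => ord.toOrd.le a b) y) x

/-- The leading coefficient of `f` (`0` if `f = 0`). -/
def lc (f : FreeMod k n d) : k :=
  WithBot.recBotCoe 0 (fun m => (f m.2).coeff m.1) (ord.lmo f)

/-- The leading monomial of `f`, as an element of `R^d` (`0` if `f = 0`). -/
def lmVec (f : FreeMod k n d) : FreeMod k n d :=
  WithBot.recBotCoe 0 (fun m => mmVec m) (ord.lmo f)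

/-- `lm(W)`: the submodule generated by the leading monomials of nonzero elements of `W`. -/
def lmSub (W : Submodule (MvPolynomial (Fin n) k) (FreeMod k n d)) :
    Submodule (MvPolynomial (Fin n) k) (FreeMod k n d) :=
  Submodule.span (MvPolynomial (Fin n) k) {v | ∃ f ∈ W, f ≠ 0 ∧ v = ord.lmVec f}

end ModMonOrder

/-- Divisibility in `R^d`: `u` divides `v` iff `v = p • u` for some polynomial `p`. -/
def dvdV (u v : FreeMod k n d) : Prop := ∃ p : MvPolynomial (Fin n) k, v = p • u

/-- `G` is a Gröbner basis of the submodule `W ⊆ R^d`. -/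
def IsGB (ord : ModMonOrder n d) (W : Submodule (MvPolynomial (Fin n) k) (FreeMod k n d))
    (G : Finset (FreeMod k n d)) : Prop :=
  Submodule.span (MvPolynomial (Fin n) k) (G : Set (FreeMod k n d)) = W ∧
  Submodule.span (MvPolynomial (Fin n) k) (ord.lmVec '' (G : Set (FreeMod k n d))) = ord.lmSub W

/-- `G` is the reduced Gröbner basis of `W ⊆ R^d`. -/
def IsRedGB (ord : ModMonOrder n d) (W : Submodule (MvPolynomial (Fin n) k) (FreeMod k n d))
    (G : Finset (FreeMod k n d)) : Prop :=
  IsGB ord W G ∧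
  (∀ g ∈ G, ∀ g' ∈ G, g ≠ g' → ¬ dvdV (ord.lmVec g) (ord.lmVec g')) ∧
  ∀ g ∈ G, ord.lc g = 1 ∧ ∀ m ∈ suppF (g - ord.lmVec g), mmVec m ∉ ord.lmSub W

/-- `p` is a normal form of `f` modulo `U`: `f - p ∈ U` and `p` is supported on
module monomials outside `lm(U)`. -/
def IsNF (ord : ModMonOrder n d) (U : Submodule (MvPolynomial (Fin n) k) (FreeMod k n d))
    (f p : FreeMod k n d) : Prop :=
  f - p ∈ U ∧ ∀ m ∈ suppF p, mmVec m ∉ ord.lmSub U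

/-- `H` is a Gröbner basis of `V` relative to `U`. -/
def IsRelGB (ord : ModMonOrder n d) (U V : Submodule (MvPolynomial (Fin n) k) (FreeMod k n d))
    (H : Finset (FreeMod k n d)) : Prop :=
  (H : Set (FreeMod k n d)) ⊆ (V : Set (FreeMod k n d)) \ (U : Set (FreeMod k n d)) ∧
  (∀ h ∈ H, ∀ m ∈ suppF h, mmVec m ∉ ord.lmSub U) ∧
  Submodule.span (MvPolynomial (Fin n) k) (ord.lmVec '' (H : Set (FreeMod k n d))) ⊔ ord.lmSub U
    = ord.lmSub V

/-- `H` is a minimal Gröbner basis of `V` relative to `U`. -/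
def IsMinRelGB (ord : ModMonOrder n d) (U V : Submodule (MvPolynomial (Fin n) k) (FreeMod k n d))
    (H : Finset (FreeMod k n d)) : Prop :=
  IsRelGB ord U V H ∧
  ∀ h ∈ H, ∀ h' ∈ H, h ≠ h' → ¬ dvdV (ord.lmVec h) (ord.lmVec h')

/-- `H` is the reduced Gröbner basis of `V` relative to `U`. -/
def IsRedRelGB (ord : ModMonOrder n d) (U V : Submodule (MvPolynomial (Fin n) k) (FreeMod k n d))
    (H : Finset (FreeMod k n d)) : Prop :=
  IsMinRelGB ord U V H ∧
  ∀ h ∈ H, ord.lc h = 1 ∧ ∀ m ∈ suppF (h - ord.lmVec h), mmVec m ∉ ord.lmSub V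

end


section AuxLemmas
variable {k : Type*} [Field k] {n d : ℕ}
open MvPolynomial

lemma mem_suppF_iff {f : FreeMod k n d} {m : ModMon n d} :
    m ∈ suppF f ↔ (f m.2).coeff m.1 ≠ 0 := by
  unfold suppF
  simp only [Finset.mem_biUnion, Finset.mem_univ, true_and, Finset.mem_image]
  constructor
  · rintro ⟨i, a, ha, rfl⟩; simpa [mem_support_iff] using ha
  · intro h; exact ⟨m.2, m.1, by simpa [mem_support_iff] using h, rfl⟩

lemma suppF_zero : suppF (0 : FreeMod k n d) = ∅ := by
  ext m; simp [mem_suppF_iff]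

lemma suppF_eq_empty_iff {f : FreeMod k n d} : suppF f = ∅ ↔ f = 0 := by
  constructor
  · intro h
    funext i; ext a
    have : ((a, i) : ModMon n d) ∉ suppF f := by simp [h]
    simpa [mem_suppF_iff] using this
  · rintro rfl; exact suppF_zero

lemma suppF_add_subset {x y : FreeMod k n d} {m : ModMon n d}
    (hm : m ∈ suppF (x + y)) : m ∈ suppF x ∨ m ∈ suppF y := by
  rw [mem_suppF_iff] at hm ⊢
  rw [mem_suppF_iff (f := y)]
  by_contra h
  push_neg at h
  simp only [Pi.add_apply, coeff_add, h.1, h.2, add_zero, ne_eq, not_true_eq_false] at hm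

lemma suppF_sub_subset {x y : FreeMod k n d} {m : ModMon n d}
    (hm : m ∈ suppF (x - y)) : m ∈ suppF x ∨ m ∈ suppF y := by
  rw [mem_suppF_iff] at hm ⊢
  rw [mem_suppF_iff (f := y)]
  by_contra h
  push_neg at h
  simp only [Pi.sub_apply, coeff_sub, h.1, h.2, sub_zero, ne_eq, not_true_eq_false] at hm

lemma suppF_mmVec (μ : ModMon n d) : suppF (mmVec μ : FreeMod k n d) = {μ} := by
  ext m
  simp only [mem_suppF_iff, Finset.mem_singleton, mmVec]
  rcases m with ⟨a, i⟩; rcases μ with ⟨b, j⟩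
  by_cases h : i = j
  · subst h
    simp only [Pi.single_apply, if_pos rfl, coeff_monomial, Prod.ext_iff, and_true]
    by_cases hab : a = b
    · simp [hab]
    · simp [hab, Ne.symm hab]
  · simp [Pi.single_apply, h, Prod.ext_iff, Ne.symm h]

lemma mmVec_ne_zero (μ : ModMon n d) : (mmVec μ : FreeMod k n d) ≠ 0 := by
  intro h
  have h2 := suppF_mmVec (k := k) μ
  rw [h, suppF_zero] at h2
  exact absurd h2.symm (Finset.singleton_ne_empty μ)

lemma smul_apply' (p : MvPolynomial (Fin n) k) (f : FreeMod k n d) (i : Fin d) :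
    (p • f) i = p * f i := rfl

lemma mmVec_dvd {ν m : ModMon n d} (h2 : ν.2 = m.2) (h1 : ν.1 ≤ m.1) :
    (mmVec m : FreeMod k n d) = (monomial (m.1 - ν.1) (1 : k)) • mmVec ν := by
  funext j
  rw [smul_apply']
  rcases ν with ⟨b, i⟩; rcases m with ⟨a, i'⟩
  cases h2
  simp only [mmVec, Pi.single_apply]
  by_cases h : j = i
  · subst h
    simp [monomial_mul, tsub_add_cancel_of_le h1]
  · simp [h]

lemma suppF_smul {p : MvPolynomial (Fin n) k} {x : FreeMod k n d} {m : ModMon n d}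
    (hm : m ∈ suppF (p • x)) : ∃ s ∈ suppF x, s.2 = m.2 ∧ s.1 ≤ m.1 := by
  rw [mem_suppF_iff] at hm
  rw [smul_apply'] at hm
  have h1 : m.1 ∈ (p * x m.2).support := mem_support_iff.2 hm
  have h2 := support_mul p (x m.2) h1
  rw [Finset.mem_add] at h2
  obtain ⟨e, he, s1, hs1, hsum⟩ := h2
  exact ⟨(s1, m.2), mem_suppF_iff.2 (mem_support_iff.1 hs1), rfl,
    by rw [← hsum]; exact le_add_self⟩

lemma dvd_of_mem_monomial_span {T : Set (ModMon n d)} {f : FreeMod k n d}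
    (hf : f ∈ Submodule.span (MvPolynomial (Fin n) k) (mmVec '' T)) :
    ∀ m ∈ suppF f, ∃ μ ∈ T, μ.2 = m.2 ∧ μ.1 ≤ m.1 := by
  induction hf using Submodule.span_induction with
  | mem x hx =>
    obtain ⟨μ, hμ, rfl⟩ := hx
    intro m hm
    rw [suppF_mmVec, Finset.mem_singleton] at hm
    exact ⟨μ, hμ, by rw [hm], by rw [hm]⟩
  | zero => intro m hm; rw [suppF_zero] at hm; exact absurd hm (Finset.notMem_empty m)
  | add x y hx hy ihx ihy =>
    intro m hm
    rcases suppF_add_subset hm with h | h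
    · exact ihx m h
    · exact ihy m h
  | smul p x hx ih =>
    intro m hm
    obtain ⟨s, hs, hs2, hs1⟩ := suppF_smul hm
    obtain ⟨μ, hμ, hμ2, hμ1⟩ := ih s hs
    exact ⟨μ, hμ, hμ2.trans hs2, hμ1.trans hs1⟩

section MaxHelper
variable {α : Type*}

lemma finMax_mem [LinearOrder α] {s : Finset α} {μ : α} (h : s.max = ↑μ) : μ ∈ s :=
  Finset.mem_of_max h

lemma finMax_le [LinearOrder α] {s : Finset α} {μ m : α} (h : s.max = ↑μ) (hm : m ∈ s) :
    m ≤ μ := WithBot.coe_le_coe.1 (h ▸ Finset.le_max hm)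

lemma finMax_eq [LinearOrder α] {s : Finset α} {μ : α} (hmem : μ ∈ s)
    (hle : ∀ m ∈ s, m ≤ μ) : s.max = ↑μ :=
  le_antisymm (Finset.max_le (fun m hm => WithBot.coe_le_coe.2 (hle m hm))) (Finset.le_max hmem)

lemma finMax_exists [LinearOrder α] {s : Finset α} (h : s.Nonempty) : ∃ μ : α, s.max = ↑μ :=
  Finset.max_of_nonempty h

lemma my_lt_irrefl [LinearOrder α] (a : α) : ¬ a < a := lt_irrefl a

lemma my_le_of_lt [LinearOrder α] {a b : α} (h : a < b) : a ≤ b := le_of_lt h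

lemma my_lt_of_le_of_ne [LinearOrder α] {a b : α} (h : a ≤ b) (h2 : a ≠ b) : a < b :=
  lt_of_le_of_ne h h2

lemma my_lt_of_le_of_lt [LinearOrder α] {a b c : α} (h : a ≤ b) (h2 : b < c) : a < c :=
  lt_of_le_of_lt h h2

lemma my_lt_trichotomy [LinearOrder α] (a b : α) : a < b ∨ a = b ∨ b < a :=
  lt_trichotomy a b

end MaxHelper

namespace ModMonOrder

variable (ord : ModMonOrder n d)

lemma lmo_spec {f : FreeMod k n d} (hf : f ≠ 0) :
    ∃ μ : ModMon n d, ord.lmo f = ↑μ ∧ μ ∈ suppF f ∧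
      (∀ m ∈ suppF f, ord.toOrd.le m μ) ∧
      ord.lc f = (f μ.2).coeff μ.1 ∧ ord.lmVec f = mmVec μ := by
  have hne : (suppF f).Nonempty :=
    Finset.nonempty_of_ne_empty (fun h => hf (suppF_eq_empty_iff.1 h))
  obtain ⟨μ, hμ⟩ := @finMax_exists _ ord.toOrd _ hne
  have hmax : ord.lmo f = ↑μ := hμ
  refine ⟨μ, hmax, @finMax_mem _ ord.toOrd _ _ hμ,
    fun m hm => @finMax_le _ ord.toOrd _ _ _ hμ hm, ?_, ?_⟩
  · rw [lc, hmax]; rfl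
  · rw [lmVec, hmax]; rfl

lemma mem_suppF_of_lmo {f : FreeMod k n d} {μ : ModMon n d}
    (h : ord.lmo f = ↑μ) : μ ∈ suppF f := @finMax_mem _ ord.toOrd _ _ h

lemma le_of_mem_suppF {f : FreeMod k n d} {μ m : ModMon n d}
    (h : ord.lmo f = ↑μ) (hm : m ∈ suppF f) : ord.toOrd.le m μ :=
  @finMax_le _ ord.toOrd _ _ _ h hm

lemma lc_eq_of_lmo {f : FreeMod k n d} {μ : ModMon n d}
    (h : ord.lmo f = ↑μ) : ord.lc f = (f μ.2).coeff μ.1 := by rw [lc, h]; rfl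

lemma lmVec_eq_of_lmo {f : FreeMod k n d} {μ : ModMon n d}
    (h : ord.lmo f = ↑μ) : ord.lmVec f = mmVec μ := by rw [lmVec, h]; rfl

lemma lmo_eq_of {f : FreeMod k n d} {μ : ModMon n d}
    (hmem : μ ∈ suppF f) (hle : ∀ m ∈ suppF f, ord.toOrd.le m μ) :
    ord.lmo f = ↑μ :=
  @finMax_eq _ ord.toOrd _ _ hmem hle

lemma lmo_add_eq {x y : FreeMod k n d} {ν : ModMon n d}
    (hy : ord.lmo y = ↑ν) (hx : ∀ m ∈ suppF x, ord.toOrd.lt m ν) :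
    ord.lmo (x + y) = ↑ν := by
  have hxc : (x ν.2).coeff ν.1 = 0 := by
    by_contra h
    exact absurd (hx ν (mem_suppF_iff.2 h)) (@my_lt_irrefl _ ord.toOrd ν)
  have hyc : (y ν.2).coeff ν.1 ≠ 0 := mem_suppF_iff.1 (ord.mem_suppF_of_lmo hy)
  have hmem : ν ∈ suppF (x + y) := by
    rw [mem_suppF_iff]
    simpa [hxc] using hyc
  refine ord.lmo_eq_of hmem (fun m hm => ?_)
  rcases suppF_add_subset hm with h | h
  · exact @my_le_of_lt _ ord.toOrd _ _ (hx m h)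
  · exact ord.le_of_mem_suppF hy h

lemma lmVec_mem_lmSub {W : Submodule (MvPolynomial (Fin n) k) (FreeMod k n d)}
    {f : FreeMod k n d} (hf : f ∈ W) (h0 : f ≠ 0) : ord.lmVec f ∈ ord.lmSub W :=
  Submodule.subset_span ⟨f, hf, h0, rfl⟩

lemma lmSub_eq_span (W : Submodule (MvPolynomial (Fin n) k) (FreeMod k n d)) :
    ord.lmSub W = Submodule.span (MvPolynomial (Fin n) k)
      (mmVec '' {μ : ModMon n d | ∃ f ∈ W, f ≠ 0 ∧ ord.lmo f = ↑μ}) := by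
  unfold lmSub
  congr 1
  ext v
  constructor
  · rintro ⟨f, hf, h0, rfl⟩
    obtain ⟨μ, hμ, -, -, -, hvec⟩ := ord.lmo_spec h0
    exact ⟨μ, ⟨f, hf, h0, hμ⟩, hvec.symm⟩
  · rintro ⟨μ, ⟨f, hf, h0, hμ⟩, rfl⟩
    exact ⟨f, hf, h0, (ord.lmVec_eq_of_lmo hμ).symm⟩

lemma lmSub_mono {W W' : Submodule (MvPolynomial (Fin n) k) (FreeMod k n d)}
    (h : W ≤ W') : ord.lmSub W ≤ ord.lmSub W' := by
  apply Submodule.span_mono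
  rintro v ⟨f, hf, h0, rfl⟩
  exact ⟨f, h hf, h0, rfl⟩

end ModMonOrder

lemma suppF_monomial_smul {a : Fin n →₀ ℕ} {c : k} {g : FreeMod k n d} {m : ModMon n d}
    (hm : m ∈ suppF ((MvPolynomial.monomial a c : MvPolynomial (Fin n) k) • g)) :
    ∃ s ∈ suppF g, m = (a + s.1, s.2) := by
  rw [mem_suppF_iff, smul_apply', coeff_monomial_mul'] at hm
  split_ifs at hm with h
  · refine ⟨(m.1 - a, m.2), mem_suppF_iff.2 ?_, ?_⟩
    · intro hc; rw [hc, mul_zero] at hm; exact hm rfl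
    · have h2 : a + (m.1 - a) = m.1 := add_tsub_cancel_of_le h
      show m = (a + (m.1 - a), m.2)
      rw [h2]
  · exact absurd rfl hm

namespace ModMonOrder

variable (ord : ModMonOrder n d)

lemma reduce_suppF_lt {f g : FreeMod k n d} {μ ν : ModMon n d}
    (hfμ : ord.lmo f = ↑μ) (hgν : ord.lmo g = ↑ν) (hcomp : ν.2 = μ.2) (hle : ν.1 ≤ μ.1) :
    ∀ m ∈ suppF (f - (MvPolynomial.monomial (μ.1 - ν.1) (ord.lc f / ord.lc g)) • g),
      ord.toOrd.lt m μ := by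
  set a := μ.1 - ν.1 with ha
  set c := ord.lc f / ord.lc g with hc
  have hlcg : (g ν.2).coeff ν.1 ≠ 0 := mem_suppF_iff.1 (ord.mem_suppF_of_lmo hgν)
  have hlcf : ord.lc f = (f μ.2).coeff μ.1 := ord.lc_eq_of_lmo hfμ
  have hlcg' : ord.lc g = (g ν.2).coeff ν.1 := ord.lc_eq_of_lmo hgν
  have hg0 : ord.lc g ≠ 0 := by rw [hlcg']; exact hlcg
  have haν : a + ν.1 = μ.1 := tsub_add_cancel_of_le hle
  have hcoeff : (((f - (monomial a c) • g)) μ.2).coeff μ.1 = 0 := by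
    have h1 : (((monomial a c : MvPolynomial (Fin n) k) • g) μ.2).coeff μ.1
        = c * (g ν.2).coeff ν.1 := by
      rw [smul_apply', ← hcomp, ← haν, coeff_monomial_mul]
    rw [Pi.sub_apply, coeff_sub, h1, ← hlcg', hc, div_mul_cancel₀ _ hg0, ← hlcf, sub_self]
  intro m hm
  have hne : m ≠ μ := by
    intro h
    rw [h, mem_suppF_iff] at hm
    exact hm hcoeff
  refine @my_lt_of_le_of_ne _ ord.toOrd _ _ ?_ hne
  rcases suppF_sub_subset hm with h | h
  · exact ord.le_of_mem_suppF hfμ h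
  · obtain ⟨s, hs, rfl⟩ := suppF_monomial_smul h
    have hsν : ord.toOrd.le (s.1, s.2) (ν.1, ν.2) := by
      rw [Prod.mk.eta, Prod.mk.eta]
      exact ord.le_of_mem_suppF hgν hs
    have := ord.add_le a s.1 ν.1 s.2 ν.2 hsν
    rw [haν, hcomp, Prod.mk.eta] at this
    exact this

lemma sup_eq_monomial_span (U : Submodule (MvPolynomial (Fin n) k) (FreeMod k n d))
    (H : Finset (FreeMod k n d)) (hH0 : ∀ h ∈ H, h ≠ 0) :
    Submodule.span (MvPolynomial (Fin n) k) (ord.lmVec '' (H : Set (FreeMod k n d)))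
        ⊔ ord.lmSub U
      = Submodule.span (MvPolynomial (Fin n) k)
        (mmVec '' ({μ : ModMon n d | ∃ h ∈ H, ord.lmo h = ↑μ}
          ∪ {μ : ModMon n d | ∃ u ∈ U, u ≠ 0 ∧ ord.lmo u = ↑μ})) := by
  have hspanH : ord.lmVec '' (H : Set (FreeMod k n d))
      = mmVec '' {μ : ModMon n d | ∃ h ∈ H, ord.lmo h = ↑μ} := by
    ext v; constructor
    · rintro ⟨h, hh, rfl⟩
      obtain ⟨μ, hμ, -, -, -, hvec⟩ := ord.lmo_spec (hH0 h hh)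
      exact ⟨μ, ⟨h, hh, hμ⟩, hvec.symm⟩
    · rintro ⟨μ, ⟨h, hh, hμ⟩, rfl⟩
      exact ⟨h, hh, ord.lmVec_eq_of_lmo hμ⟩
  rw [hspanH, ord.lmSub_eq_span U, Set.image_union, Submodule.span_union]

lemma mem_span_sup_of_lmSub
    (U V : Submodule (MvPolynomial (Fin n) k) (FreeMod k n d)) (hUV : U ≤ V)
    (H : Finset (FreeMod k n d))
    (hHV : ∀ h ∈ H, h ∈ V) (hH0 : ∀ h ∈ H, h ≠ 0)
    (hA : Submodule.span (MvPolynomial (Fin n) k) (ord.lmVec '' (H : Set (FreeMod k n d)))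
        ⊔ ord.lmSub U = ord.lmSub V) :
    ∀ f ∈ V, f ∈ Submodule.span (MvPolynomial (Fin n) k) (H : Set (FreeMod k n d)) ⊔ U := by
  have key : ∀ μ₀ : ModMon n d, ∀ f, f ∈ V → ord.lmo f = ↑μ₀ →
      f ∈ Submodule.span (MvPolynomial (Fin n) k) (H : Set (FreeMod k n d)) ⊔ U := by
    intro μ₀
    refine ord.wf.induction
      (C := fun μ => ∀ f, f ∈ V → ord.lmo f = ↑μ →
        f ∈ Submodule.span (MvPolynomial (Fin n) k) (H : Set (FreeMod k n d)) ⊔ U)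
      μ₀ ?_
    intro μ IH f hfV hflm
    have hf0 : f ≠ 0 := by
      rintro rfl
      have hz : ord.lmo (0 : FreeMod k n d) = ⊥ := by
        unfold ModMonOrder.lmo
        rw [suppF_zero]
        rfl
      rw [hz] at hflm
      exact WithBot.bot_ne_coe hflm
    have hmm : mmVec μ ∈ Submodule.span (MvPolynomial (Fin n) k)
        (mmVec (k := k) '' ({ν : ModMon n d | ∃ h ∈ H, ord.lmo h = ↑ν}
          ∪ {ν : ModMon n d | ∃ u ∈ U, u ≠ 0 ∧ ord.lmo u = ↑ν})) := by
      rw [← ord.sup_eq_monomial_span U H hH0, hA, ← ord.lmVec_eq_of_lmo hflm]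
      exact ord.lmVec_mem_lmSub hfV hf0
    obtain ⟨ν, hν, hν2, hν1⟩ := dvd_of_mem_monomial_span hmm μ
      (by rw [suppF_mmVec]; exact Finset.mem_singleton_self μ)
    obtain ⟨g, hgV, hg0, hgν, hgspan⟩ : ∃ g, g ∈ V ∧ g ≠ 0 ∧ ord.lmo g = ↑ν ∧
        g ∈ Submodule.span (MvPolynomial (Fin n) k) (H : Set (FreeMod k n d)) ⊔ U := by
      rcases hν with hν | hν
      · obtain ⟨h, hh, hμh⟩ := hν
        exact ⟨h, hHV h hh, hH0 h hh, hμh,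
          Submodule.mem_sup_left (Submodule.subset_span hh)⟩
      · obtain ⟨u, hu, hu0, hμu⟩ := hν
        exact ⟨u, hUV hu, hu0, hμu, Submodule.mem_sup_right hu⟩
    set q := (MvPolynomial.monomial (μ.1 - ν.1) (ord.lc f / ord.lc g)
      : MvPolynomial (Fin n) k) • g with hq
    have hqspan : q ∈ Submodule.span (MvPolynomial (Fin n) k)
        (H : Set (FreeMod k n d)) ⊔ U := Submodule.smul_mem _ _ hgspan
    have hqV : q ∈ V := Submodule.smul_mem _ _ hgV
    have hlt := ord.reduce_suppF_lt hflm hgν hν2 hν1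
    by_cases hfq : f - q = 0
    · rw [sub_eq_zero] at hfq
      rw [hfq]
      exact hqspan
    · obtain ⟨μ', hμ', hmem', -, -, -⟩ := ord.lmo_spec hfq
      have hrec : f - q ∈ Submodule.span (MvPolynomial (Fin n) k)
          (H : Set (FreeMod k n d)) ⊔ U :=
        IH μ' (hlt μ' hmem') (f - q) (Submodule.sub_mem V hfV hqV) hμ'
      have := Submodule.add_mem _ hrec hqspan
      rwa [sub_add_cancel] at this
  intro f hf
  by_cases hf0 : f = 0
  · rw [hf0]; exact Submodule.zero_mem _
  · obtain ⟨μ, hμ, -, -, -, -⟩ := ord.lmo_spec hf0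
    exact key μ f hf hμ

end ModMonOrder

lemma nf_fixed (ord : ModMonOrder n d)
    {U : Submodule (MvPolynomial (Fin n) k) (FreeMod k n d)} {f p : FreeMod k n d}
    (hU : f - p ∈ U)
    (hf : ∀ m ∈ suppF f, mmVec m ∉ ord.lmSub U)
    (hp : ∀ m ∈ suppF p, mmVec m ∉ ord.lmSub U) : p = f := by
  by_contra hne
  have h0 : f - p ≠ 0 := fun h => hne (sub_eq_zero.1 h).symm
  obtain ⟨μ, hμ, hmem, -, -, hvec⟩ := ord.lmo_spec h0
  have hmm : mmVec μ ∈ ord.lmSub U := hvec ▸ ord.lmVec_mem_lmSub hU h0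
  rcases suppF_sub_subset hmem with h | h
  · exact hf μ h hmm
  · exact hp μ h hmm

lemma lmSub_decomp (ord : ModMonOrder n d)
    (U V : Submodule (MvPolynomial (Fin n) k) (FreeMod k n d)) (hUV : U ≤ V)
    (nf : FreeMod k n d → FreeMod k n d) (hnf : ∀ f, IsNF ord U f (nf f)) :
    Submodule.span (MvPolynomial (Fin n) k)
        {v : FreeMod k n d | ∃ f ∈ V, f ∉ U ∧ v = ord.lmVec (nf f)} ⊔ ord.lmSub U
      = ord.lmSub V := by
  have hnfV : ∀ f ∈ V, nf f ∈ V := by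
    intro f hf
    have h1 : f - (f - nf f) ∈ V := Submodule.sub_mem V hf (hUV (hnf f).1)
    rwa [sub_sub_cancel] at h1
  have hnf0 : ∀ f ∈ V, f ∉ U → nf f ≠ 0 := by
    intro f _ hfu h0
    have h1 := (hnf f).1
    rw [h0, sub_zero] at h1
    exact hfu h1
  apply le_antisymm
  · refine sup_le ?_ (ord.lmSub_mono hUV)
    rw [Submodule.span_le]
    rintro v ⟨f, hf, hfu, rfl⟩
    exact ord.lmVec_mem_lmSub (hnfV f hf) (hnf0 f hf hfu)
  · rw [ModMonOrder.lmSub, Submodule.span_le]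
    rintro v ⟨f, hfV, hf0, rfl⟩
    by_cases hfU : f ∈ U
    · exact Submodule.mem_sup_right (ord.lmVec_mem_lmSub hfU hf0)
    · have hpmem : ord.lmVec (nf f) ∈ Submodule.span (MvPolynomial (Fin n) k)
          {v : FreeMod k n d | ∃ f ∈ V, f ∉ U ∧ v = ord.lmVec (nf f)} :=
        Submodule.subset_span ⟨f, hfV, hfU, rfl⟩
      by_cases hu0 : f - nf f = 0
      · have heq : f = nf f := sub_eq_zero.1 hu0
        rw [heq]
        exact Submodule.mem_sup_left hpmem
      · obtain ⟨α, hα, hαmem, -, -, hαvec⟩ := ord.lmo_spec hu0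
        have hp0 : nf f ≠ 0 := hnf0 f hfV hfU
        obtain ⟨β, hβ, hβmem, -, -, hβvec⟩ := ord.lmo_spec hp0
        have hfup : f = (f - nf f) + nf f := by ring
        have hαU : mmVec α ∈ ord.lmSub U := hαvec ▸ ord.lmVec_mem_lmSub ((hnf f).1) hu0
        have hβU : mmVec β ∉ ord.lmSub U := (hnf f).2 β hβmem
        have hαβ : α ≠ β := fun h => hβU (h ▸ hαU)
        rcases @my_lt_trichotomy _ ord.toOrd α β with hlt | heq | hlt
        · have hlmf : ord.lmo f = ↑β := by
            rw [hfup]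
            exact ord.lmo_add_eq hβ (fun m hm =>
              @my_lt_of_le_of_lt _ ord.toOrd _ _ _ (ord.le_of_mem_suppF hα hm) hlt)
          rw [ord.lmVec_eq_of_lmo hlmf, ← hβvec]
          exact Submodule.mem_sup_left hpmem
        · exact absurd heq hαβ
        · have hlmf : ord.lmo f = ↑α := by
            rw [hfup, add_comm]
            exact ord.lmo_add_eq hα (fun m hm =>
              @my_lt_of_le_of_lt _ ord.toOrd _ _ _ (ord.le_of_mem_suppF hβ hm) hlt)
          rw [ord.lmVec_eq_of_lmo hlmf]
          exact Submodule.mem_sup_right hαU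

end AuxLemmas

/-- A finite set `H ⊆ V ∖ U` supported on module monomials outside `lm(U)` is a Gröbner
basis of `V` relative to `U` iff `{h + U : h ∈ H}` is a Gröbner basis of the quotient
`V/U ⊆ R^d/U`: it generates `V/U` and for every module monomial `m ∈ lm(V/U)` there is
`h ∈ H` with `lm(h + U) ∣ m`.  Here `lm(f + U) = lm(NF(f, U))`. -/
theorem relative_groebner_basis_iff_quotient_groebner_basis
    {k : Type*} [Field k] {n d : ℕ}
    (ord : ModMonOrder n d)
    (U V : Submodule (MvPolynomial (Fin n) k) (FreeMod k n d))
    (hUV : U ≤ V)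
    (nf : FreeMod k n d → FreeMod k n d)
    (hnf : ∀ f, IsNF ord U f (nf f))
    (H : Finset (FreeMod k n d))
    (hHVU : (H : Set (FreeMod k n d)) ⊆ (V : Set (FreeMod k n d)) \ (U : Set (FreeMod k n d)))
    (hHsupp : ∀ h ∈ H, ∀ m ∈ suppF h, mmVec m ∉ ord.lmSub U) :
    IsRelGB ord U V H ↔
      (Submodule.span (MvPolynomial (Fin n) k) (U.mkQ '' (H : Set (FreeMod k n d)))
          = V.map U.mkQ ∧
        ∀ m : ModMon n d,
          mmVec m ∈ Submodule.span (MvPolynomial (Fin n) k)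
            {v : FreeMod k n d | ∃ f ∈ V, f ∉ U ∧ v = ord.lmVec (nf f)} →
          ∃ h ∈ H, dvdV (ord.lmVec (nf h)) (mmVec m)) := by
  classical
  have hH0 : ∀ h ∈ H, h ≠ 0 := fun h hh h0 => (hHVU hh).2 (h0 ▸ U.zero_mem)
  have hHV : ∀ h ∈ H, h ∈ V := fun h hh => (hHVU hh).1
  have hnfh : ∀ h ∈ H, nf h = h := fun h hh =>
    nf_fixed ord (hnf h).1 (hHsupp h hh) ((hnf h).2)
  have hdecomp := lmSub_decomp ord U V hUV nf hnf
  have hnfV : ∀ f ∈ V, nf f ∈ V := by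
    intro f hf
    have h1 : f - (f - nf f) ∈ V := Submodule.sub_mem V hf (hUV (hnf f).1)
    rwa [sub_sub_cancel] at h1
  have hnf0 : ∀ f ∈ V, f ∉ U → nf f ≠ 0 := by
    intro f _ hfu h0
    have h1 := (hnf f).1
    rw [h0, sub_zero] at h1
    exact hfu h1
  have hSeq : {v : FreeMod k n d | ∃ f ∈ V, f ∉ U ∧ v = ord.lmVec (nf f)}
      = mmVec (k := k) '' {μ : ModMon n d | ∃ f ∈ V, f ∉ U ∧ ord.lmo (nf f) = ↑μ} := by
    ext v; constructor
    · rintro ⟨f, hf, hfu, rfl⟩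
      obtain ⟨μ, hμ, -, -, -, hvec⟩ := ord.lmo_spec (hnf0 f hf hfu)
      exact ⟨μ, ⟨f, hf, hfu, hμ⟩, hvec.symm⟩
    · rintro ⟨μ, ⟨f, hf, hfu, hμ⟩, rfl⟩
      exact ⟨f, hf, hfu, (ord.lmVec_eq_of_lmo hμ).symm⟩
  constructor
  · rintro ⟨-, -, hA⟩
    constructor
    · -- the quotient images generate V/U
      have hspanHU : Submodule.span (MvPolynomial (Fin n) k)
          (H : Set (FreeMod k n d)) ⊔ U = V := by
        apply le_antisymm
        · exact sup_le (Submodule.span_le.2 (fun h hh => hHV h hh)) hUV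
        · intro f hf
          exact ord.mem_span_sup_of_lmSub U V hUV H hHV hH0 hA f hf
      have hmap : V.map U.mkQ
          = (Submodule.span (MvPolynomial (Fin n) k) (H : Set (FreeMod k n d))).map U.mkQ := by
        rw [← hspanHU, Submodule.map_sup, Submodule.mkQ_map_self, sup_bot_eq]
      rw [hmap, Submodule.map_span]
    · -- the divisibility condition
      intro m hm
      rw [hSeq] at hm
      obtain ⟨μ, hμT, hμ2, hμ1⟩ := dvd_of_mem_monomial_span hm m
        (by rw [suppF_mmVec]; exact Finset.mem_singleton_self m)
      obtain ⟨f, hfV, hfU, hμ⟩ := hμT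
      have hμsupp : μ ∈ suppF (nf f) := ord.mem_suppF_of_lmo hμ
      have hμU : mmVec μ ∉ ord.lmSub U := (hnf f).2 μ hμsupp
      have hmmV : mmVec μ ∈ Submodule.span (MvPolynomial (Fin n) k)
          (mmVec (k := k) '' ({ν : ModMon n d | ∃ h ∈ H, ord.lmo h = ↑ν}
            ∪ {ν : ModMon n d | ∃ u ∈ U, u ≠ 0 ∧ ord.lmo u = ↑ν})) := by
        rw [← ord.sup_eq_monomial_span U H hH0, hA, ← ord.lmVec_eq_of_lmo hμ]
        exact ord.lmVec_mem_lmSub (hnfV f hfV) (hnf0 f hfV hfU)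
      obtain ⟨ν, hν, hν2, hν1⟩ := dvd_of_mem_monomial_span hmmV μ
        (by rw [suppF_mmVec]; exact Finset.mem_singleton_self μ)
      rcases hν with hν | hν
      · obtain ⟨h, hh, hνh⟩ := hν
        refine ⟨h, hh, ?_⟩
        rw [hnfh h hh, ord.lmVec_eq_of_lmo hνh]
        exact ⟨MvPolynomial.monomial (m.1 - ν.1) 1,
          mmVec_dvd (hν2.trans hμ2) (hν1.trans hμ1)⟩
      · obtain ⟨u, hu, hu0, hνu⟩ := hν
        exfalso
        apply hμU
        rw [mmVec_dvd hν2 hν1]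
        apply Submodule.smul_mem
        rw [← ord.lmVec_eq_of_lmo hνu]
        exact ord.lmVec_mem_lmSub hu hu0
  · rintro ⟨_, hC⟩
    refine ⟨hHVU, hHsupp, ?_⟩
    apply le_antisymm
    · refine sup_le ?_ (ord.lmSub_mono hUV)
      rw [Submodule.span_le]
      rintro v ⟨h, hh, rfl⟩
      exact ord.lmVec_mem_lmSub (hHV h hh) (hH0 h hh)
    · rw [← hdecomp]
      refine sup_le ?_ le_sup_right
      rw [Submodule.span_le]
      rintro v ⟨f, hfV, hfU, rfl⟩
      obtain ⟨μ, hμ, -, -, -, hvec⟩ := ord.lmo_spec (hnf0 f hfV hfU)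
      have hmem : mmVec μ ∈ Submodule.span (MvPolynomial (Fin n) k)
          {v : FreeMod k n d | ∃ f ∈ V, f ∉ U ∧ v = ord.lmVec (nf f)} :=
        Submodule.subset_span ⟨f, hfV, hfU, hvec.symm⟩
      obtain ⟨h, hh, p, hpeq⟩ := hC μ hmem
      rw [hvec, hpeq, hnfh h hh]
      exact Submodule.mem_sup_left (Submodule.smul_mem _ _ (Submodule.subset_span ⟨h, hh, rfl⟩))
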